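/- arXiv:2509.03637 — 2 statements merged into one kernel-verified Lean document; each statement's English description precedes it below -/
import Mathlib

section
/- Let x₁ < x₂ be real numbers with ζ = x₂ − x₁ > 0, and let α, β, m > 0 with α ≠ β. Then ∫_ℝ |x − x₁|^m e^{−α(x−x₁)₊} e^{−β(x₂−x)₊} dx ≤ C(α,β,m) · max((1 + ζ^m) e^{−αζ}, e^{−βζ}), where C(α,β,m) is a constant depending only on α, β, m and (y)₊ = max(y,0) denotes the positive part. -/
open MeasureTheory Set

private lemma aux_rpow_exp_int {m : ℝ} (hm : 0 < m) {c : ℝ} (hc : 0 < c) :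
    IntegrableOn (fun s : ℝ => s ^ m * Real.exp (-c * s)) (Ioi 0) := by
  have := integrableOn_rpow_mul_exp_neg_mul_rpow (p := 1) (s := m) (b := c)
    (by linarith) one_pos hc
  simpa [Real.rpow_one] using this

private lemma aux_two_rpow {m s ζ : ℝ} (hm : 0 < m) (hs : 0 < s) (hζ : 0 < ζ) :
    (s + ζ) ^ m ≤ 2 ^ m * (s ^ m + ζ ^ m) := by
  have h2 : (0:ℝ) < 2 ^ m := Real.rpow_pos_of_pos (by norm_num) m
  rcases le_total s ζ with h | h
  · calc (s + ζ) ^ m ≤ (2 * ζ) ^ m :=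
          Real.rpow_le_rpow (by positivity) (by linarith) hm.le
      _ = 2 ^ m * ζ ^ m := Real.mul_rpow (by norm_num) hζ.le
      _ ≤ 2 ^ m * (s ^ m + ζ ^ m) := by
          have := Real.rpow_nonneg hs.le m
          nlinarith
  · calc (s + ζ) ^ m ≤ (2 * s) ^ m :=
          Real.rpow_le_rpow (by positivity) (by linarith) hm.le
      _ = 2 ^ m * s ^ m := Real.mul_rpow (by norm_num) hs.le
      _ ≤ 2 ^ m * (s ^ m + ζ ^ m) := by
          have := Real.rpow_nonneg hζ.le m
          nlinarith

private lemma aux_arith {a E Iv Ev z : ℝ} (ha : 0 ≤ a) (hE : 0 ≤ E) (hI : 0 ≤ Iv)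
    (hEv : 0 ≤ Ev) (hz : 0 ≤ z) :
    E * (a * Iv + (a * z) * Ev) ≤ a * (Iv + Ev) * ((1 + z) * E) := by
  nlinarith [mul_nonneg (mul_nonneg (mul_nonneg ha hI) hz) hE,
    mul_nonneg (mul_nonneg ha hEv) hE]

private lemma key (α β m : ℝ) (hα : 0 < α) (hβ : 0 < β) (hm : 0 < m) (hαβ : α ≠ β) :
    ∃ C : ℝ, 0 < C ∧ ∀ ζ : ℝ, 0 < ζ →
      (∫ t : ℝ, |t| ^ m * Real.exp (-α * max t 0) * Real.exp (-β * max (ζ - t) 0)) ≤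
        C * max ((1 + ζ ^ m) * Real.exp (-α * ζ)) (Real.exp (-β * ζ)) := by
  set δ := |α - β| with hδdef
  have hδ : 0 < δ := abs_pos.mpr (sub_ne_zero.mpr hαβ)
  obtain ⟨Iα, hIα⟩ : ∃ y : ℝ, y = ∫ s in Ioi (0:ℝ), s ^ m * Real.exp (-α * s) := ⟨_, rfl⟩
  obtain ⟨Iβ, hIβ⟩ : ∃ y : ℝ, y = ∫ s in Ioi (0:ℝ), s ^ m * Real.exp (-β * s) := ⟨_, rfl⟩
  obtain ⟨Iδ, hIδ⟩ : ∃ y : ℝ, y = ∫ s in Ioi (0:ℝ), s ^ m * Real.exp (-δ * s) := ⟨_, rfl⟩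
  obtain ⟨Eα, hEα⟩ : ∃ y : ℝ, y = ∫ s in Ioi (0:ℝ), Real.exp (-α * s) := ⟨_, rfl⟩
  obtain ⟨Eδ, hEδ⟩ : ∃ y : ℝ, y = ∫ s in Ioi (0:ℝ), Real.exp (-δ * s) := ⟨_, rfl⟩
  have hIα0 : 0 ≤ Iα := hIα ▸ setIntegral_nonneg measurableSet_Ioi
    (fun s hs => mul_nonneg (Real.rpow_nonneg (le_of_lt hs) m) (Real.exp_nonneg _))
  have hIβ0 : 0 ≤ Iβ := hIβ ▸ setIntegral_nonneg measurableSet_Ioi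
    (fun s hs => mul_nonneg (Real.rpow_nonneg (le_of_lt hs) m) (Real.exp_nonneg _))
  have hIδ0 : 0 ≤ Iδ := hIδ ▸ setIntegral_nonneg measurableSet_Ioi
    (fun s hs => mul_nonneg (Real.rpow_nonneg (le_of_lt hs) m) (Real.exp_nonneg _))
  have hEα0 : 0 ≤ Eα := hEα ▸ setIntegral_nonneg measurableSet_Ioi
    (fun s _ => Real.exp_nonneg _)
  have hEδ0 : 0 ≤ Eδ := hEδ ▸ setIntegral_nonneg measurableSet_Ioi
    (fun s _ => Real.exp_nonneg _)
  have h2m : (0:ℝ) < 2 ^ m := Real.rpow_pos_of_pos (by norm_num) m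
  refine ⟨1 + Iβ + 2 ^ m * (Iα + Eα) + Iδ + Eδ, by positivity, ?_⟩
  intro ζ hζ
  set γ := min α β with hγdef
  have hγ : 0 < γ := lt_min hα hβ
  set f := fun t : ℝ => |t| ^ m * Real.exp (-α * max t 0) * Real.exp (-β * max (ζ - t) 0)
    with hfdef
  obtain ⟨M, hMdef⟩ : ∃ y : ℝ,
      y = max ((1 + ζ ^ m) * Real.exp (-α * ζ)) (Real.exp (-β * ζ)) := ⟨_, rfl⟩
  have hM0 : 0 < M := hMdef ▸ lt_of_lt_of_le (Real.exp_pos _) (le_max_right _ _)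
  have hM1 : (1 + ζ ^ m) * Real.exp (-α * ζ) ≤ M := hMdef ▸ le_max_left _ _
  have hM2 : Real.exp (-β * ζ) ≤ M := hMdef ▸ le_max_right _ _
  have hζm0 : 0 ≤ ζ ^ m := Real.rpow_nonneg hζ.le m
  -- nonnegativity and continuity of f
  have hf0 : ∀ t, 0 ≤ f t := fun t => by
    have : (0:ℝ) ≤ |t| ^ m := Real.rpow_nonneg (abs_nonneg t) m
    positivity
  have hfc : Continuous f := by
    refine ((continuous_abs.rpow_const fun x => Or.inr hm.le).mul ?_).mul ?_
    · exact Real.continuous_exp.comp (continuous_const.mul (continuous_id.max continuous_const))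
    · exact Real.continuous_exp.comp
        (continuous_const.mul ((continuous_const.sub continuous_id).max continuous_const))
  -- global dominating function
  set g := fun t : ℝ => |t| ^ m * Real.exp (-γ * |t|) with hgdef
  have hfg : ∀ t, f t ≤ g t := by
    intro t
    have h1 : Real.exp (-α * max t 0) * Real.exp (-β * max (ζ - t) 0)
        ≤ Real.exp (-γ * |t|) := by
      rw [← Real.exp_add]
      apply Real.exp_le_exp.mpr
      rcases le_total 0 t with h | h
      · rw [max_eq_left h, abs_of_nonneg h]
        have h3 : 0 ≤ β * max (ζ - t) 0 := by positivity
        have h4 : γ ≤ α := min_le_left _ _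
        nlinarith
      · rw [max_eq_right h, abs_of_nonpos h,
          max_eq_left (by linarith : (0:ℝ) ≤ ζ - t)]
        have h4 : γ ≤ β := min_le_right _ _
        nlinarith
    show |t| ^ m * Real.exp (-α * max t 0) * Real.exp (-β * max (ζ - t) 0) ≤
      |t| ^ m * Real.exp (-γ * |t|)
    rw [mul_assoc]
    exact mul_le_mul_of_nonneg_left h1 (Real.rpow_nonneg (abs_nonneg t) m)
  have hgIoi : IntegrableOn g (Ioi 0) := by
    apply (aux_rpow_exp_int hm hγ).congr_fun ?_ measurableSet_Ioi
    intro s hs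
    rw [hgdef]
    simp only [abs_of_pos (mem_Ioi.mp hs)]
  have hgIic : IntegrableOn g (Iic 0) := by
    rw [show (volume : Measure ℝ) = Measure.map Neg.neg volume from
      (Measure.map_neg_eq_self (volume : Measure ℝ)).symm]
    have A : MeasurableEmbedding fun x : ℝ => -x :=
      (Homeomorph.neg ℝ).measurableEmbedding
    rw [A.integrableOn_map_iff]
    have h1 : (g ∘ fun x : ℝ => -x) = g := by
      ext x
      simp [hgdef, abs_neg]
    rw [h1]
    have h2 : (fun x : ℝ => -x) ⁻¹' Iic 0 = Ici 0 := by
      ext x; simp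
    rw [h2]
    exact Iff.mpr integrableOn_Ici_iff_integrableOn_Ioi hgIoi
  have hgint : Integrable g := by
    rw [← integrableOn_univ, ← Iic_union_Ioi (a := (0:ℝ))]
    exact hgIic.union hgIoi
  have hfint : Integrable f := by
    apply hgint.mono' hfc.aestronglyMeasurable
    filter_upwards with t
    rw [Real.norm_eq_abs, abs_of_nonneg (hf0 t)]
    exact hfg t
  -- split the integral into three pieces
  have hsplit : ∫ t, f t = (∫ t in Iic 0, f t) +
      ((∫ t in Ioc 0 ζ, f t) + (∫ t in Ioi ζ, f t)) := by
    rw [← intervalIntegral.integral_Iic_add_Ioi hfint.integrableOn hfint.integrableOn]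
    congr 1
    rw [← Ioc_union_Ioi_eq_Ioi hζ.le,
      setIntegral_union Ioc_disjoint_Ioi_same measurableSet_Ioi
        hfint.integrableOn hfint.integrableOn]
  -- piece 1 : over Iic 0
  have hp1 : (∫ t in Iic 0, f t) = Real.exp (-β * ζ) * Iβ := by
    have hcong : ∀ t ∈ Iic (0:ℝ), f t =
        Real.exp (-β * ζ) * (|(-t)| ^ m * Real.exp (-β * (-t))) := by
      intro t ht
      have ht' : t ≤ 0 := mem_Iic.mp ht
      rw [hfdef]
      simp only
      rw [max_eq_right ht', max_eq_left (by linarith : (0:ℝ) ≤ ζ - t),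
        mul_zero, Real.exp_zero, mul_one, abs_neg]
      have : Real.exp (-β * (ζ - t)) = Real.exp (-β * ζ) * Real.exp (-β * (-t)) := by
        rw [← Real.exp_add]; congr 1; ring
      rw [this]; ring
    rw [setIntegral_congr_fun measurableSet_Iic hcong, integral_const_mul]
    congr 1
    have h3 := integral_comp_neg_Iic (0:ℝ) (fun s => |s| ^ m * Real.exp (-β * s))
    simp only [neg_zero] at h3
    rw [h3, hIβ]
    apply setIntegral_congr_fun measurableSet_Ioi
    intro s hs
    simp only [abs_of_pos (mem_Ioi.mp hs)]
  -- piece 3 : over Ioi ζ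
  have hp3 : (∫ t in Ioi ζ, f t) ≤ 2 ^ m * (Iα + Eα) * ((1 + ζ ^ m) * Real.exp (-α * ζ)) := by
    have hshift : (∫ t in Ioi ζ, f t) = ∫ s in Ioi (0:ℝ), f (s + ζ) := by
      have hind : ∀ x, (Ioi ζ).indicator f x =
          (Ioi (0:ℝ)).indicator (fun s => f (s + ζ)) (x - ζ) := by
        intro x
        by_cases hx : ζ < x
        · rw [Set.indicator_of_mem (mem_Ioi.mpr hx),
            Set.indicator_of_mem (mem_Ioi.mpr (by linarith)), sub_add_cancel]
        · rw [Set.indicator_of_notMem (by simpa using hx),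
            Set.indicator_of_notMem (by simp only [mem_Ioi, sub_pos]; exact hx)]
      rw [← integral_indicator measurableSet_Ioi, ← integral_indicator measurableSet_Ioi]
      simp_rw [hind]
      exact integral_sub_right_eq_self _ ζ
    rw [hshift]
    have hfint3 : IntegrableOn (fun s => f (s + ζ)) (Ioi 0) := by
      have h4 := hfint.comp_sub_right (-ζ)
      simp only [sub_neg_eq_add] at h4
      exact h4.integrableOn
    set h3 := fun s : ℝ => Real.exp (-α * ζ) *
      (2 ^ m * (s ^ m * Real.exp (-α * s)) + (2 ^ m * ζ ^ m) * Real.exp (-α * s)) with h3def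
    have h3int : IntegrableOn h3 (Ioi 0) :=
      Integrable.const_mul (((aux_rpow_exp_int hm hα).const_mul _).add
        ((exp_neg_integrableOn_Ioi 0 hα).const_mul _)) _
    have hmono : (∫ s in Ioi (0:ℝ), f (s + ζ)) ≤ ∫ s in Ioi (0:ℝ), h3 s := by
      apply setIntegral_mono_on hfint3 h3int measurableSet_Ioi
      intro s hs
      have hs0 : 0 < s := mem_Ioi.mp hs
      have hfv : f (s + ζ) = (s + ζ) ^ m * Real.exp (-α * (s + ζ)) := by
        rw [hfdef]
        simp only
        rw [max_eq_left (by linarith : (0:ℝ) ≤ s + ζ),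
          max_eq_right (by linarith : ζ - (s + ζ) ≤ 0),
          mul_zero, Real.exp_zero, mul_one, abs_of_pos (by linarith : (0:ℝ) < s + ζ)]
      rw [hfv]
      have hexp : Real.exp (-α * (s + ζ)) = Real.exp (-α * ζ) * Real.exp (-α * s) := by
        rw [← Real.exp_add]; congr 1; ring
      have hb := aux_two_rpow hm hs0 hζ
      calc (s + ζ) ^ m * Real.exp (-α * (s + ζ))
          ≤ (2 ^ m * (s ^ m + ζ ^ m)) * Real.exp (-α * (s + ζ)) :=
            mul_le_mul_of_nonneg_right hb (Real.exp_nonneg _)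
        _ = h3 s := by rw [h3def, hexp]; ring
    refine hmono.trans ?_
    have hval : (∫ s in Ioi (0:ℝ), h3 s) =
        Real.exp (-α * ζ) * (2 ^ m * Iα + (2 ^ m * ζ ^ m) * Eα) := by
      rw [h3def, integral_const_mul, hIα, hEα]
      congr 1
      rw [integral_add (((aux_rpow_exp_int hm hα).const_mul _))
        ((exp_neg_integrableOn_Ioi 0 hα).const_mul _), integral_const_mul, integral_const_mul]
    rw [hval]
    exact aux_arith h2m.le (Real.exp_nonneg _) hIα0 hEα0 hζm0
  -- piece 2 : over Ioc 0 ζ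
  have hp2 : (∫ t in Ioc 0 ζ, f t) ≤ (Iδ + Eδ) * M := by
    rcases lt_or_gt_of_ne hαβ with hlt | hgt
    · -- α < β : bound by ζ^m exp(-αζ) Eδ
      have hδval : δ = β - α := by rw [hδdef, abs_of_neg (by linarith : α - β < 0)]; ring
      have hbound : ∀ t ∈ Ioc (0:ℝ) ζ, f t ≤
          (ζ ^ m * Real.exp (-α * ζ)) * Real.exp (-δ * (ζ - t)) := by
        intro t ht
        obtain ⟨ht0, htζ⟩ := ht
        have hfv : f t = t ^ m * Real.exp (-α * t) * Real.exp (-β * (ζ - t)) := by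
          rw [hfdef]
          simp only
          rw [max_eq_left ht0.le, max_eq_left (by linarith : (0:ℝ) ≤ ζ - t),
            abs_of_pos ht0]
        rw [hfv]
        have hexp : Real.exp (-α * t) * Real.exp (-β * (ζ - t)) =
            Real.exp (-α * ζ) * Real.exp (-δ * (ζ - t)) := by
          rw [← Real.exp_add, ← Real.exp_add]; congr 1; rw [hδval]; ring
        rw [mul_assoc, hexp]
        have htm : t ^ m ≤ ζ ^ m := Real.rpow_le_rpow ht0.le htζ hm.le
        have hpos : (0:ℝ) ≤ Real.exp (-α * ζ) * Real.exp (-δ * (ζ - t)) := by positivity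
        calc t ^ m * (Real.exp (-α * ζ) * Real.exp (-δ * (ζ - t)))
            ≤ ζ ^ m * (Real.exp (-α * ζ) * Real.exp (-δ * (ζ - t))) :=
              mul_le_mul_of_nonneg_right htm hpos
          _ = (ζ ^ m * Real.exp (-α * ζ)) * Real.exp (-δ * (ζ - t)) := by ring
      have hint2 : IntegrableOn (fun t => (ζ ^ m * Real.exp (-α * ζ)) *
          Real.exp (-δ * (ζ - t))) (Ioc 0 ζ) := by
        apply Continuous.integrableOn_Ioc
        exact continuous_const.mul (Real.continuous_exp.comp
          (continuous_const.mul (continuous_const.sub continuous_id)))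
      have step1 : (∫ t in Ioc 0 ζ, f t) ≤
          ∫ t in Ioc 0 ζ, (ζ ^ m * Real.exp (-α * ζ)) * Real.exp (-δ * (ζ - t)) :=
        setIntegral_mono_on hfint.integrableOn hint2 measurableSet_Ioc hbound
      have step2 : (∫ t in Ioc 0 ζ, (ζ ^ m * Real.exp (-α * ζ)) *
          Real.exp (-δ * (ζ - t))) = (ζ ^ m * Real.exp (-α * ζ)) *
          ∫ t in Ioc 0 ζ, Real.exp (-δ * (ζ - t)) := integral_const_mul _ _
      have step3 : (∫ t in Ioc 0 ζ, Real.exp (-δ * (ζ - t))) ≤ Eδ := by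
        have hrefl : (∫ t in Ioc 0 ζ, Real.exp (-δ * (ζ - t))) =
            ∫ u in Ioc 0 ζ, Real.exp (-δ * u) := by
          rw [← intervalIntegral.integral_of_le hζ.le, ← intervalIntegral.integral_of_le hζ.le]
          have h5 := intervalIntegral.integral_comp_sub_left (a := (0:ℝ)) (b := ζ)
            (fun u => Real.exp (-δ * u)) ζ
          simpa using h5
        rw [hrefl, hEδ]
        apply setIntegral_mono_set (exp_neg_integrableOn_Ioi 0 hδ)
        · filter_upwards with u using Real.exp_nonneg _
        · exact HasSubset.Subset.eventuallyLE Ioc_subset_Ioi_self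
      have h6 : ζ ^ m * Real.exp (-α * ζ) ≤ M := by
        refine le_trans ?_ hM1
        have := Real.exp_nonneg (-α * ζ)
        nlinarith
      calc (∫ t in Ioc 0 ζ, f t) ≤ (ζ ^ m * Real.exp (-α * ζ)) *
            ∫ t in Ioc 0 ζ, Real.exp (-δ * (ζ - t)) := by rw [← step2]; exact step1
        _ ≤ (ζ ^ m * Real.exp (-α * ζ)) * Eδ :=
            mul_le_mul_of_nonneg_left step3 (by positivity)
        _ ≤ M * Eδ := mul_le_mul_of_nonneg_right h6 hEδ0
        _ = Eδ * M := by ring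
        _ ≤ (Iδ + Eδ) * M := mul_le_mul_of_nonneg_right (by linarith) hM0.le
    · -- β < α : bound by exp(-βζ) Iδ
      have hδval : δ = α - β := by rw [hδdef, abs_of_pos (by linarith : 0 < α - β)]
      have hbound : ∀ t ∈ Ioc (0:ℝ) ζ, f t ≤
          Real.exp (-β * ζ) * (t ^ m * Real.exp (-δ * t)) := by
        intro t ht
        obtain ⟨ht0, htζ⟩ := ht
        have hfv : f t = t ^ m * Real.exp (-α * t) * Real.exp (-β * (ζ - t)) := by
          rw [hfdef]
          simp only
          rw [max_eq_left ht0.le, max_eq_left (by linarith : (0:ℝ) ≤ ζ - t),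
            abs_of_pos ht0]
        rw [hfv]
        have hexp : Real.exp (-α * t) * Real.exp (-β * (ζ - t)) =
            Real.exp (-β * ζ) * Real.exp (-δ * t) := by
          rw [← Real.exp_add, ← Real.exp_add]; congr 1; rw [hδval]; ring
        rw [mul_assoc, hexp]
        exact le_of_eq (by ring)
      have hint2 : IntegrableOn (fun t => Real.exp (-β * ζ) *
          (t ^ m * Real.exp (-δ * t))) (Ioc 0 ζ) :=
        IntegrableOn.mono_set ((aux_rpow_exp_int hm hδ).const_mul _) Ioc_subset_Ioi_self
      have step1 : (∫ t in Ioc 0 ζ, f t) ≤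
          ∫ t in Ioc 0 ζ, Real.exp (-β * ζ) * (t ^ m * Real.exp (-δ * t)) :=
        setIntegral_mono_on hfint.integrableOn hint2 measurableSet_Ioc hbound
      have step2 : (∫ t in Ioc 0 ζ, Real.exp (-β * ζ) * (t ^ m * Real.exp (-δ * t))) =
          Real.exp (-β * ζ) * ∫ t in Ioc 0 ζ, t ^ m * Real.exp (-δ * t) :=
        integral_const_mul _ _
      have step3 : (∫ t in Ioc 0 ζ, t ^ m * Real.exp (-δ * t)) ≤ Iδ := by
        rw [hIδ]
        apply setIntegral_mono_set (aux_rpow_exp_int hm hδ)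
        · refine (ae_restrict_iff' measurableSet_Ioi).mpr ?_
          filter_upwards with u hu
          exact mul_nonneg (Real.rpow_nonneg (le_of_lt hu) m) (Real.exp_nonneg _)
        · exact HasSubset.Subset.eventuallyLE Ioc_subset_Ioi_self
      calc (∫ t in Ioc 0 ζ, f t) ≤ Real.exp (-β * ζ) *
            ∫ t in Ioc 0 ζ, t ^ m * Real.exp (-δ * t) := by rw [← step2]; exact step1
        _ ≤ Real.exp (-β * ζ) * Iδ :=
            mul_le_mul_of_nonneg_left step3 (Real.exp_nonneg _)
        _ ≤ M * Iδ := mul_le_mul_of_nonneg_right hM2 hIδ0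
        _ = Iδ * M := by ring
        _ ≤ (Iδ + Eδ) * M := mul_le_mul_of_nonneg_right (by linarith) hM0.le
  -- combine
  have hp1' : (∫ t in Iic 0, f t) ≤ Iβ * M := by
    rw [hp1, mul_comm]
    exact mul_le_mul_of_nonneg_left hM2 hIβ0
  have hp3' : (∫ t in Ioi ζ, f t) ≤ 2 ^ m * (Iα + Eα) * M := by
    refine hp3.trans ?_
    exact mul_le_mul_of_nonneg_left hM1 (by positivity)
  rw [hsplit, ← hMdef]
  have hexpand : (1 + Iβ + 2 ^ m * (Iα + Eα) + Iδ + Eδ) * M =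
      M + Iβ * M + 2 ^ m * (Iα + Eα) * M + (Iδ + Eδ) * M := by ring
  rw [hexpand]
  linarith

theorem stmt1 (α β m : ℝ) (hα : 0 < α) (hβ : 0 < β) (hm : 0 < m) (hαβ : α ≠ β) :
    ∃ C : ℝ, 0 < C ∧ ∀ x₁ x₂ : ℝ, x₁ < x₂ →
      (∫ x : ℝ, |x - x₁| ^ m * Real.exp (-α * max (x - x₁) 0) *
          Real.exp (-β * max (x₂ - x) 0)) ≤
        C * max ((1 + (x₂ - x₁) ^ m) * Real.exp (-α * (x₂ - x₁)))
              (Real.exp (-β * (x₂ - x₁))) := by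
  obtain ⟨C, hC, hbound⟩ := key α β m hα hβ hm hαβ
  refine ⟨C, hC, ?_⟩
  intro x₁ x₂ h
  have hζ : 0 < x₂ - x₁ := sub_pos.mpr h
  have hkey := hbound (x₂ - x₁) hζ
  have heq : (∫ x : ℝ, |x - x₁| ^ m * Real.exp (-α * max (x - x₁) 0) *
      Real.exp (-β * max (x₂ - x) 0)) =
      ∫ t : ℝ, |t| ^ m * Real.exp (-α * max t 0) *
        Real.exp (-β * max ((x₂ - x₁) - t) 0) := by
    rw [← integral_sub_right_eq_self (fun t => |t| ^ m * Real.exp (-α * max t 0) *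
      Real.exp (-β * max ((x₂ - x₁) - t) 0)) x₁]
    congr 1
    ext x
    have hx : x₂ - x₁ - (x - x₁) = x₂ - x := by ring
    rw [hx]
  rw [heq]
  exact hkey
end

section
/- Let α > 1 be a real number. Then there exists a constant C = C(α) such that for all t ≥ 0, ∫₀ᵗ (1+t−s)^{−α} (1+s)^{−1} ds ≤ C · max((1+t)^{−1}, log(2+t)·(1+t)^{−α}). -/
open MeasureTheory

/-- The logarithmic integral. -/
lemma aux_log_integral (t : ℝ) (ht : 0 ≤ t) :
    ∫ s in (0:ℝ)..t, (1 + s) ^ (-(1:ℝ)) = Real.log (1 + t) := by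
  have h : Set.EqOn (fun s : ℝ => (1 + s) ^ (-(1:ℝ)))
      (fun s : ℝ => (fun x : ℝ => x⁻¹) (1 + s)) (Set.uIcc 0 t) := by
    intro s _
    simp [Real.rpow_neg_one]
  rw [intervalIntegral.integral_congr h,
    intervalIntegral.integral_comp_add_left (fun x : ℝ => x⁻¹) 1, add_zero]
  rw [integral_inv_of_pos one_pos (by linarith)]
  simp

/-- The decaying tail integral is bounded. -/
lemma aux_decay_integral (α t : ℝ) (hα : 1 < α) (ht : 0 ≤ t) :
    ∫ s in (0:ℝ)..t, (1 + t - s) ^ (-α) ≤ 1 / (α - 1) := by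
  have h : Set.EqOn (fun s : ℝ => (1 + t - s) ^ (-α))
      (fun s : ℝ => (fun x : ℝ => (1 + x) ^ (-α)) (t - s)) (Set.uIcc 0 t) := by
    intro s _
    simp only
    ring_nf
  rw [intervalIntegral.integral_congr h,
    intervalIntegral.integral_comp_sub_left (fun x : ℝ => (1 + x) ^ (-α)) t]
  have h2 : Set.EqOn (fun x : ℝ => (1 + x) ^ (-α))
      (fun x : ℝ => (fun y : ℝ => y ^ (-α)) (1 + x)) (Set.uIcc (t - t) (t - 0)) := by
    intro x _; rfl
  rw [intervalIntegral.integral_congr h2,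
    intervalIntegral.integral_comp_add_left (fun y : ℝ => y ^ (-α)) 1]
  have h0 : (0:ℝ) ∉ Set.uIcc (1 + (t - t)) (1 + (t - 0)) := by
    rw [Set.uIcc_of_le (by linarith)]
    intro hc
    simp only [Set.mem_Icc] at hc
    linarith [hc.1]
  rw [integral_rpow (Or.inr ⟨by linarith, h0⟩)]
  have h1 : (1:ℝ) + (t - t) = 1 := by ring
  have hb : (0:ℝ) < 1 + (t - 0) := by linarith
  rw [h1, Real.one_rpow]
  have hpow : (0:ℝ) ≤ (1 + (t - 0)) ^ (-α + 1) := Real.rpow_nonneg (by linarith) _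
  have key : ((1 + (t - 0)) ^ (-α + 1) - 1) / (-α + 1) =
      (1 - (1 + (t - 0)) ^ (-α + 1)) / (α - 1) := by
    rw [div_eq_div_iff (by linarith) (by linarith)]
    ring
  rw [key]
  have := (div_le_div_iff_of_pos_right (show (0:ℝ) < α - 1 by linarith)).mpr
    (show 1 - (1 + (t - 0)) ^ (-α + 1) ≤ 1 by linarith)
  exact this

theorem stmt5 (α : ℝ) (hα : 1 < α) :
    ∃ C : ℝ, 0 < C ∧ ∀ t : ℝ, 0 ≤ t →
      (∫ s in (0:ℝ)..t, (1 + t - s) ^ (-α) * (1 + s) ^ (-(1:ℝ))) ≤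
        C * max ((1 + t) ^ (-(1:ℝ))) (Real.log (2 + t) * (1 + t) ^ (-α)) := by
  have hC : (0:ℝ) < ((2:ℝ) ^ α + 2) / (α - 1) := by
    apply div_pos
    · have : (0:ℝ) < (2:ℝ) ^ α := Real.rpow_pos_of_pos two_pos α
      linarith
    · linarith
  refine ⟨((2:ℝ) ^ α + 2) / (α - 1), hC, ?_⟩
  intro t ht
  set A : ℝ := (1 + t / 2) ^ (-α) with hA
  set B : ℝ := (1 + t / 2) ^ (-(1:ℝ)) with hB
  have hthalf : (0:ℝ) < 1 + t / 2 := by linarith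
  have h1t : (0:ℝ) < 1 + t := by linarith
  -- Continuity facts
  have hcont1 : ContinuousOn (fun s : ℝ => (1 + t - s) ^ (-α)) (Set.uIcc 0 t) := by
    apply ContinuousOn.rpow_const
    · exact (continuousOn_const.sub continuousOn_id)
    · intro x hx
      rw [Set.uIcc_of_le ht] at hx
      left
      have := hx.2
      intro hc; rw [sub_eq_zero] at hc; nlinarith [hx.1, hx.2]
  have hcont2 : ContinuousOn (fun s : ℝ => (1 + s) ^ (-(1:ℝ))) (Set.uIcc 0 t) := by
    apply ContinuousOn.rpow_const
    · exact (continuousOn_const.add continuousOn_id)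
    · intro x hx
      rw [Set.uIcc_of_le ht] at hx
      left; intro hc; nlinarith [hx.1]
  have hint_f : IntervalIntegrable
      (fun s : ℝ => (1 + t - s) ^ (-α) * (1 + s) ^ (-(1:ℝ))) volume 0 t :=
    (hcont1.mul hcont2).intervalIntegrable
  have hint_g1 : IntervalIntegrable (fun s : ℝ => A * (1 + s) ^ (-(1:ℝ))) volume 0 t :=
    (continuousOn_const.mul hcont2).intervalIntegrable
  have hint_g2 : IntervalIntegrable (fun s : ℝ => B * (1 + t - s) ^ (-α)) volume 0 t :=
    (continuousOn_const.mul hcont1).intervalIntegrable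
  -- Pointwise bound
  have hpt : ∀ s ∈ Set.Icc (0:ℝ) t,
      (1 + t - s) ^ (-α) * (1 + s) ^ (-(1:ℝ)) ≤
        A * (1 + s) ^ (-(1:ℝ)) + B * (1 + t - s) ^ (-α) := by
    intro s hs
    obtain ⟨hs0, hst⟩ := hs
    have h1s : (0:ℝ) < 1 + s := by linarith
    have h1ts : (0:ℝ) < 1 + t - s := by linarith
    rcases le_or_gt s (t / 2) with hcase | hcase
    · -- s ≤ t/2: (1+t-s)^(-α) ≤ A
      have hb : (1 + t - s) ^ (-α) ≤ A :=
        Real.rpow_le_rpow_of_nonpos hthalf (by linarith) (by linarith)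
      have h2 : (0:ℝ) ≤ B * (1 + t - s) ^ (-α) :=
        mul_nonneg (Real.rpow_nonneg hthalf.le _) (Real.rpow_nonneg h1ts.le _)
      nlinarith [Real.rpow_nonneg h1s.le (-(1:ℝ))]
    · -- s > t/2: (1+s)^(-1) ≤ B
      have hb : (1 + s) ^ (-(1:ℝ)) ≤ B :=
        Real.rpow_le_rpow_of_nonpos hthalf (by linarith) (by linarith)
      have h2 : (0:ℝ) ≤ A * (1 + s) ^ (-(1:ℝ)) :=
        mul_nonneg (Real.rpow_nonneg hthalf.le _) (Real.rpow_nonneg h1s.le _)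
      nlinarith [Real.rpow_nonneg h1ts.le (-α)]
  have hstep1 : (∫ s in (0:ℝ)..t, (1 + t - s) ^ (-α) * (1 + s) ^ (-(1:ℝ))) ≤
      ∫ s in (0:ℝ)..t, (A * (1 + s) ^ (-(1:ℝ)) + B * (1 + t - s) ^ (-α)) :=
    intervalIntegral.integral_mono_on ht hint_f (hint_g1.add hint_g2) hpt
  have hsplit : (∫ s in (0:ℝ)..t, (A * (1 + s) ^ (-(1:ℝ)) + B * (1 + t - s) ^ (-α))) =
      A * Real.log (1 + t) + B * ∫ s in (0:ℝ)..t, (1 + t - s) ^ (-α) := by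
    rw [intervalIntegral.integral_add hint_g1 hint_g2,
      intervalIntegral.integral_const_mul, intervalIntegral.integral_const_mul,
      aux_log_integral t ht]
  -- Bound the two pieces
  have hAbound : A * Real.log (1 + t) ≤ (2:ℝ) ^ α / (α - 1) * (1 + t) ^ (-(1:ℝ)) := by
    -- A ≤ 2^α * (1+t)^(-α)
    have hA2 : A ≤ (2:ℝ) ^ α * (1 + t) ^ (-α) := by
      have h1 : (1 + t) / 2 ≤ 1 + t / 2 := by linarith
      have h2 : A ≤ ((1 + t) / 2) ^ (-α) :=
        Real.rpow_le_rpow_of_nonpos (by linarith) h1 (by linarith)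
      have h3 : ((1 + t) / 2) ^ (-α) = (1 + t) ^ (-α) / (2:ℝ) ^ (-α) :=
        Real.div_rpow h1t.le (by norm_num : (0:ℝ) ≤ 2) (-α)
      have h4 : ((2:ℝ)) ^ (-α) = ((2:ℝ) ^ α)⁻¹ := Real.rpow_neg (by norm_num) α
      rw [h3, h4, div_eq_mul_inv, inv_inv] at h2
      linarith [h2, mul_comm ((1 + t) ^ (-α)) ((2:ℝ) ^ α)]
    -- log(1+t) ≤ (1+t)^(α-1)/(α-1)
    have hlog : Real.log (1 + t) ≤ (1 + t) ^ (α - 1) / (α - 1) := by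
      have h5 : Real.log ((1 + t) ^ (α - 1)) = (α - 1) * Real.log (1 + t) :=
        Real.log_rpow h1t _
      have h6 : Real.log ((1 + t) ^ (α - 1)) ≤ (1 + t) ^ (α - 1) - 1 :=
        Real.log_le_sub_one_of_pos (Real.rpow_pos_of_pos h1t _)
      rw [h5] at h6
      rw [le_div_iff₀ (by linarith)]
      have hp : (0:ℝ) ≤ (1 + t) ^ (α - 1) := Real.rpow_nonneg h1t.le _
      nlinarith
    have hlog0 : 0 ≤ Real.log (1 + t) := Real.log_nonneg (by linarith)
    have hA0 : 0 ≤ A := Real.rpow_nonneg hthalf.le _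
    calc A * Real.log (1 + t)
        ≤ ((2:ℝ) ^ α * (1 + t) ^ (-α)) * ((1 + t) ^ (α - 1) / (α - 1)) := by
          apply mul_le_mul hA2 hlog hlog0
          positivity
      _ = (2:ℝ) ^ α / (α - 1) * ((1 + t) ^ (-α) * (1 + t) ^ (α - 1)) := by ring
      _ = (2:ℝ) ^ α / (α - 1) * (1 + t) ^ (-(1:ℝ)) := by
          rw [← Real.rpow_add h1t, show -α + (α - 1) = (-1:ℝ) by ring]
  have hBbound : B * (∫ s in (0:ℝ)..t, (1 + t - s) ^ (-α)) ≤
      2 / (α - 1) * (1 + t) ^ (-(1:ℝ)) := by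
    have hB2 : B ≤ 2 * (1 + t) ^ (-(1:ℝ)) := by
      have h1 : (1 + t) / 2 ≤ 1 + t / 2 := by linarith
      have h2 : B ≤ ((1 + t) / 2) ^ (-(1:ℝ)) :=
        Real.rpow_le_rpow_of_nonpos (by linarith) h1 (by norm_num)
      have h3 : ((1 + t) / 2) ^ (-(1:ℝ)) = 2 * (1 + t) ^ (-(1:ℝ)) := by
        rw [Real.rpow_neg_one, Real.rpow_neg_one]
        field_simp
      linarith [h2, h3.symm.le]
    have hI := aux_decay_integral α t hα ht
    have hI0 : 0 ≤ ∫ s in (0:ℝ)..t, (1 + t - s) ^ (-α) := by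
      apply intervalIntegral.integral_nonneg ht
      intro s hs
      exact Real.rpow_nonneg (by linarith [hs.2]) _
    have hB0 : 0 ≤ B := Real.rpow_nonneg hthalf.le _
    calc B * (∫ s in (0:ℝ)..t, (1 + t - s) ^ (-α))
        ≤ (2 * (1 + t) ^ (-(1:ℝ))) * (1 / (α - 1)) := by
          apply mul_le_mul hB2 hI hI0
          positivity
      _ = 2 / (α - 1) * (1 + t) ^ (-(1:ℝ)) := by ring
  -- Combine
  have hfinal : (∫ s in (0:ℝ)..t, (1 + t - s) ^ (-α) * (1 + s) ^ (-(1:ℝ))) ≤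
      ((2:ℝ) ^ α + 2) / (α - 1) * (1 + t) ^ (-(1:ℝ)) := by
    calc (∫ s in (0:ℝ)..t, (1 + t - s) ^ (-α) * (1 + s) ^ (-(1:ℝ)))
        ≤ A * Real.log (1 + t) + B * ∫ s in (0:ℝ)..t, (1 + t - s) ^ (-α) := by
          rw [← hsplit]; exact hstep1
      _ ≤ (2:ℝ) ^ α / (α - 1) * (1 + t) ^ (-(1:ℝ)) + 2 / (α - 1) * (1 + t) ^ (-(1:ℝ)) :=
          add_le_add hAbound hBbound
      _ = ((2:ℝ) ^ α + 2) / (α - 1) * (1 + t) ^ (-(1:ℝ)) := by ring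
  refine hfinal.trans ?_
  apply mul_le_mul_of_nonneg_left (le_max_left _ _) hC.le
end
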